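/- arXiv:2001.10782 — 2 statements merged into one kernel-verified Lean document; each statement's English description precedes it below -/
import Mathlib

section
/- Let ε be a real random variable with P(ε ≠ 0) > 0 and E[μ|ε|/(1+|ε|)] well-defined. Define g(c) = E[μ|ε|/(√c + |ε|)] for c > 0 where μ > 1. Then g is continuous and strictly decreasing in c on (0, ∞), with lim_{c→0+} g(c) = μ·P(ε ≠ 0) and lim_{c→∞} g(c) = 0; hence if μ·P(ε ≠ 0) > 1 there exists a unique c_H > 0 with g(c_H) = 1. -/
open MeasureTheory Filter

theorem mu_score_identifiability {Ω : Type*} [MeasureSpace Ω]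
    (P : Measure Ω) [IsProbabilityMeasure P] (ε : Ω → ℝ) (hε : Measurable ε)
    (μ : ℝ) (hμ : 1 < μ)
    (hpos : 0 < (P {ω | ε ω ≠ 0}).toReal)
    (hint : Integrable (fun ω => μ * |ε ω| / (1 + |ε ω|)) P) :
    ContinuousOn (fun c : ℝ => ∫ ω, μ * |ε ω| / (Real.sqrt c + |ε ω|) ∂P) (Set.Ioi 0) ∧
    StrictAntiOn (fun c : ℝ => ∫ ω, μ * |ε ω| / (Real.sqrt c + |ε ω|) ∂P) (Set.Ioi 0) ∧
    Tendsto (fun c : ℝ => ∫ ω, μ * |ε ω| / (Real.sqrt c + |ε ω|) ∂P)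
      (nhdsWithin 0 (Set.Ioi 0)) (nhds (μ * (P {ω | ε ω ≠ 0}).toReal)) ∧
    Tendsto (fun c : ℝ => ∫ ω, μ * |ε ω| / (Real.sqrt c + |ε ω|) ∂P)
      atTop (nhds 0) ∧
    (1 < μ * (P {ω | ε ω ≠ 0}).toReal →
      ∃! c : ℝ, 0 < c ∧ (∫ ω, μ * |ε ω| / (Real.sqrt c + |ε ω|) ∂P) = 1) := by
  have hμ0 : (0:ℝ) < μ := lt_trans one_pos hμ
  have hmeas : ∀ c : ℝ, AEStronglyMeasurable
      (fun ω => μ * |ε ω| / (Real.sqrt c + |ε ω|)) P := fun c =>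
    ((measurable_const.mul hε.abs).div (measurable_const.add hε.abs)).aestronglyMeasurable
  have hnonneg : ∀ c : ℝ, 0 < c → ∀ ω, 0 ≤ μ * |ε ω| / (Real.sqrt c + |ε ω|) := by
    intro c hc ω
    have h1 : 0 < Real.sqrt c := Real.sqrt_pos.2 hc
    have h2 : 0 < Real.sqrt c + |ε ω| := by positivity
    positivity
  have hbound : ∀ c : ℝ, 0 < c → ∀ ω, ‖μ * |ε ω| / (Real.sqrt c + |ε ω|)‖ ≤ μ := by
    intro c hc ω
    have h1 : 0 < Real.sqrt c := Real.sqrt_pos.2 hc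
    have h2 : 0 < Real.sqrt c + |ε ω| := by positivity
    rw [Real.norm_eq_abs, abs_of_nonneg (hnonneg c hc ω)]
    rw [div_le_iff₀ h2]
    nlinarith [abs_nonneg (ε ω)]
  have hint' : ∀ c : ℝ, 0 < c →
      Integrable (fun ω => μ * |ε ω| / (Real.sqrt c + |ε ω|)) P := by
    intro c hc
    exact (integrable_const μ).mono' (hmeas c) (ae_of_all _ (hbound c hc))
  -- continuity
  have hcont : ContinuousOn (fun c : ℝ => ∫ ω, μ * |ε ω| / (Real.sqrt c + |ε ω|) ∂P)
      (Set.Ioi 0) := by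
    intro c hc
    have hc0 : (0:ℝ) < c := hc
    refine tendsto_integral_filter_of_dominated_convergence (fun _ => μ)
      (Eventually.of_forall fun c' => hmeas c') ?_ (integrable_const μ) ?_
    · filter_upwards [self_mem_nhdsWithin] with c' hc'
      exact ae_of_all _ (hbound c' hc')
    · refine ae_of_all _ fun ω => ?_
      have hden : Real.sqrt c + |ε ω| ≠ 0 := by
        have := Real.sqrt_pos.2 hc0; positivity
      have : ContinuousAt (fun c' : ℝ => μ * |ε ω| / (Real.sqrt c' + |ε ω|)) c :=
        continuousAt_const.div
          ((Real.continuous_sqrt.continuousAt).add continuousAt_const) hden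
      exact this.continuousWithinAt
  -- strict antitone
  have hanti : StrictAntiOn (fun c : ℝ => ∫ ω, μ * |ε ω| / (Real.sqrt c + |ε ω|) ∂P)
      (Set.Ioi 0) := by
    intro c1 hc1 c2 hc2 h12
    have hc1' : (0:ℝ) < c1 := hc1
    have hc2' : (0:ℝ) < c2 := hc2
    have hs12 : Real.sqrt c1 < Real.sqrt c2 := Real.sqrt_lt_sqrt hc1'.le h12
    have hs1 : 0 < Real.sqrt c1 := Real.sqrt_pos.2 hc1'
    have hdiff_nonneg : ∀ ω,
        0 ≤ μ * |ε ω| / (Real.sqrt c1 + |ε ω|) - μ * |ε ω| / (Real.sqrt c2 + |ε ω|) := by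
      intro ω
      have h1 : 0 < Real.sqrt c1 + |ε ω| := by positivity
      have h2 : 0 < Real.sqrt c2 + |ε ω| := by linarith [abs_nonneg (ε ω)]
      have : μ * |ε ω| / (Real.sqrt c2 + |ε ω|) ≤ μ * |ε ω| / (Real.sqrt c1 + |ε ω|) := by
        rw [div_le_div_iff₀ h2 h1]
        nlinarith [mul_nonneg hμ0.le (abs_nonneg (ε ω))]
      linarith
    have hkey : 0 < ∫ ω, (μ * |ε ω| / (Real.sqrt c1 + |ε ω|)
        - μ * |ε ω| / (Real.sqrt c2 + |ε ω|)) ∂P := by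
      rw [integral_pos_iff_support_of_nonneg hdiff_nonneg
        ((hint' c1 hc1').sub (hint' c2 hc2'))]
      have hsub : {ω | ε ω ≠ 0} ⊆ Function.support
          (fun ω => μ * |ε ω| / (Real.sqrt c1 + |ε ω|)
            - μ * |ε ω| / (Real.sqrt c2 + |ε ω|)) := by
        intro ω hω
        have habs : 0 < |ε ω| := abs_pos.2 hω
        have h1 : 0 < Real.sqrt c1 + |ε ω| := by positivity
        have h2 : Real.sqrt c1 + |ε ω| < Real.sqrt c2 + |ε ω| := by linarith
        have hlt : μ * |ε ω| / (Real.sqrt c2 + |ε ω|)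
            < μ * |ε ω| / (Real.sqrt c1 + |ε ω|) :=
          div_lt_div_of_pos_left (by positivity) h1 h2
        simp only [Function.mem_support]
        intro h; rw [sub_eq_zero] at h; exact absurd h (ne_of_gt hlt)
      refine lt_of_lt_of_le ?_ (measure_mono hsub)
      exact (ENNReal.toReal_pos_iff.mp hpos).1
    rw [integral_sub (hint' c1 hc1') (hint' c2 hc2')] at hkey
    linarith
  -- limit at 0+
  have hms : MeasurableSet {ω | ε ω ≠ 0} := (hε (measurableSet_singleton 0)).compl
  have h3 : Tendsto (fun c : ℝ => ∫ ω, μ * |ε ω| / (Real.sqrt c + |ε ω|) ∂P)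
      (nhdsWithin 0 (Set.Ioi 0)) (nhds (μ * (P {ω | ε ω ≠ 0}).toReal)) := by
    have hind : ∫ ω, Set.indicator {ω | ε ω ≠ 0} (fun _ => μ) ω ∂P
        = μ * (P {ω | ε ω ≠ 0}).toReal := by
      rw [integral_indicator_const _ hms]; simp [mul_comm]; exact Or.inl rfl
    rw [← hind]
    refine tendsto_integral_filter_of_dominated_convergence (fun _ => μ)
      (Eventually.of_forall fun c' => hmeas c') ?_ (integrable_const μ) ?_
    · filter_upwards [self_mem_nhdsWithin] with c' hc'
      exact ae_of_all _ (hbound c' hc')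
    · refine ae_of_all _ fun ω => ?_
      by_cases h : ε ω = 0
      · have : (fun c : ℝ => μ * |ε ω| / (Real.sqrt c + |ε ω|)) = fun _ => 0 := by
          funext c; simp [h]
        rw [this, Set.indicator_of_notMem (by simp [h])]
        exact tendsto_const_nhds
      · have habs : (0:ℝ) < |ε ω| := abs_pos.2 h
        have hsq : Tendsto (fun c : ℝ => Real.sqrt c) (nhdsWithin 0 (Set.Ioi 0))
            (nhds 0) := by
          have := (Real.continuous_sqrt.tendsto 0).mono_left
            (nhdsWithin_le_nhds (s := Set.Ioi (0:ℝ)))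
          simpa using this
        have hden : Tendsto (fun c : ℝ => Real.sqrt c + |ε ω|)
            (nhdsWithin 0 (Set.Ioi 0)) (nhds (0 + |ε ω|)) :=
          hsq.add tendsto_const_nhds
        have := (tendsto_const_nhds (x := μ * |ε ω|)).div hden (by positivity)
        rw [Set.indicator_of_mem (by simpa using h)]
        have heq : μ * |ε ω| / (0 + |ε ω|) = μ := by
          field_simp
          ring
        rwa [heq] at this
  -- limit at ∞
  have h4 : Tendsto (fun c : ℝ => ∫ ω, μ * |ε ω| / (Real.sqrt c + |ε ω|) ∂P)
      atTop (nhds 0) := by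
    have h0 : (0:ℝ) = ∫ _ω, (0:ℝ) ∂P := by simp
    rw [h0]
    refine tendsto_integral_filter_of_dominated_convergence (fun _ => μ)
      (Eventually.of_forall fun c' => hmeas c') ?_ (integrable_const μ) ?_
    · filter_upwards [eventually_gt_atTop (0:ℝ)] with c' hc'
      exact ae_of_all _ (hbound c' hc')
    · refine ae_of_all _ fun ω => ?_
      have hsqtop : Tendsto Real.sqrt atTop atTop := by
        have := tendsto_rpow_atTop (y := (1:ℝ)/2) (by norm_num)
        refine this.congr' ?_
        filter_upwards [eventually_ge_atTop (0:ℝ)] with x hx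
        rw [Real.sqrt_eq_rpow]
      have hden : Tendsto (fun c : ℝ => Real.sqrt c + |ε ω|) atTop atTop :=
        tendsto_atTop_add_const_right _ _ hsqtop
      exact (tendsto_const_nhds (x := μ * |ε ω|)).div_atTop hden
  refine ⟨hcont, hanti, h3, h4, ?_⟩
  -- existence and uniqueness
  intro h1
  obtain ⟨a, hga, ha⟩ :=
    ((h3.eventually (eventually_gt_nhds h1)).and self_mem_nhdsWithin).exists
  obtain ⟨b, hgb, hab⟩ :=
    ((h4.eventually (eventually_lt_nhds one_pos)).and (eventually_gt_atTop a)).exists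
  have ha0 : (0:ℝ) < a := ha
  have hb0 : (0:ℝ) < b := lt_trans ha0 hab
  have hsubset : Set.Icc a b ⊆ Set.Ioi 0 := fun x hx => lt_of_lt_of_le ha0 hx.1
  have hconts := hcont.mono hsubset
  have hmem : (1:ℝ) ∈ Set.Icc
      ((fun c : ℝ => ∫ ω, μ * |ε ω| / (Real.sqrt c + |ε ω|) ∂P) b)
      ((fun c : ℝ => ∫ ω, μ * |ε ω| / (Real.sqrt c + |ε ω|) ∂P) a) :=
    ⟨hgb.le, hga.le⟩
  obtain ⟨c, hc, hgc⟩ := intermediate_value_Icc' hab.le hconts hmem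
  have hc0 : (0:ℝ) < c := lt_of_lt_of_le ha0 hc.1
  refine ⟨c, ⟨hc0, hgc⟩, ?_⟩
  rintro y ⟨hy0, hgy⟩
  exact hanti.injOn (Set.mem_Ioi.2 hy0) (Set.mem_Ioi.2 hc0) (hgy.trans hgc.symm)
end

section
/- Let ε be a real random variable with P(ε ≠ 0) > 1/2. Define g(c) = E[2ε²/(c + ε²)] for c > 0 (the Cauchy score identifiability function). Then g is continuous, strictly decreasing on (0,∞), g(c) → 2·P(ε ≠ 0) > 1 as c → 0+, and g(c) → 0 as c → ∞; hence there is a unique c_H > 0 with g(c_H) = 1. -/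
open MeasureTheory Filter

theorem cauchy_score_identifiability {Ω : Type*} [MeasureSpace Ω]
    (P : Measure Ω) [IsProbabilityMeasure P] (ε : Ω → ℝ) (hε : Measurable ε)
    (hpos : 1 / 2 < (P {ω | ε ω ≠ 0}).toReal) :
    ContinuousOn (fun c : ℝ => ∫ ω, 2 * (ε ω) ^ 2 / (c + (ε ω) ^ 2) ∂P) (Set.Ioi 0) ∧
    StrictAntiOn (fun c : ℝ => ∫ ω, 2 * (ε ω) ^ 2 / (c + (ε ω) ^ 2) ∂P) (Set.Ioi 0) ∧
    Tendsto (fun c : ℝ => ∫ ω, 2 * (ε ω) ^ 2 / (c + (ε ω) ^ 2) ∂P)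
      (nhdsWithin 0 (Set.Ioi 0)) (nhds (2 * (P {ω | ε ω ≠ 0}).toReal)) ∧
    (1 < 2 * (P {ω | ε ω ≠ 0}).toReal) ∧
    Tendsto (fun c : ℝ => ∫ ω, 2 * (ε ω) ^ 2 / (c + (ε ω) ^ 2) ∂P) atTop (nhds 0) ∧
    (∃! c : ℝ, 0 < c ∧ (∫ ω, 2 * (ε ω) ^ 2 / (c + (ε ω) ^ 2) ∂P) = 1) := by
  set F : ℝ → Ω → ℝ := fun c ω => 2 * (ε ω) ^ 2 / (c + (ε ω) ^ 2) with hF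
  set g : ℝ → ℝ := fun c => ∫ ω, F c ω ∂P with hg
  have hmeas : ∀ c : ℝ, AEStronglyMeasurable (F c) P := fun c =>
    ((measurable_const.mul (hε.pow_const 2)).div
      (measurable_const.add (hε.pow_const 2))).aestronglyMeasurable
  have hnn : ∀ c : ℝ, 0 < c → ∀ ω, 0 ≤ F c ω := by
    intro c hc ω; have := sq_nonneg (ε ω); positivity
  have hb : ∀ c : ℝ, 0 < c → ∀ ω, F c ω ≤ 2 := by
    intro c hc ω
    rw [hF]
    rw [div_le_iff₀ (by nlinarith [sq_nonneg (ε ω)])]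
    nlinarith [sq_nonneg (ε ω)]
  have hbn : ∀ c : ℝ, 0 < c → ∀ ω, ‖F c ω‖ ≤ 2 := by
    intro c hc ω
    rw [Real.norm_eq_abs, abs_of_nonneg (hnn c hc ω)]; exact hb c hc ω
  have hint : ∀ c : ℝ, 0 < c → Integrable (F c) P := by
    intro c hc
    exact (integrable_const (2:ℝ)).mono' (hmeas c) (Filter.Eventually.of_forall (hbn c hc))
  -- continuity
  have hcont : ContinuousOn g (Set.Ioi 0) := by
    intro c₀ hc₀
    apply ContinuousAt.continuousWithinAt
    apply continuousAt_of_dominated (bound := fun _ => (2:ℝ))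
      (Filter.Eventually.of_forall fun c => hmeas c)
    · filter_upwards [IsOpen.mem_nhds isOpen_Ioi hc₀] with c hc
      exact Filter.Eventually.of_forall (hbn c hc)
    · exact integrable_const 2
    · refine Filter.Eventually.of_forall fun ω => ?_
      have hd : (c₀ + (ε ω) ^ 2) ≠ 0 := by
        have := sq_nonneg (ε ω); have := hc₀.out; positivity
      exact (continuousAt_const.div ((continuous_id.add continuous_const).continuousAt) hd)
  -- strict antitone
  have hne : P {ω | ε ω ≠ 0} ≠ 0 := by
    intro h
    rw [h] at hpos; simp at hpos; linarith
  have hanti : StrictAntiOn g (Set.Ioi 0) := by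
    intro a ha b hb hab
    have hsub : 0 < ∫ ω, (F a ω - F b ω) ∂P := by
      rw [integral_pos_iff_support_of_nonneg_ae]
      · have hsupp : Function.support (fun ω => F a ω - F b ω) = {ω | ε ω ≠ 0} := by
          ext ω
          simp only [Function.mem_support, Set.mem_setOf_eq, hF]
          constructor
          · intro h h0
            apply h; rw [h0]; simp
          · intro h0
            have hx : 0 < (ε ω) ^ 2 := by positivity
            have : F b ω < F a ω := by
              rw [hF]
              apply div_lt_div_of_pos_left (by linarith) (by linarith [ha.out]) (by linarith)
            simp only [hF] at this ⊢
            intro h; rw [sub_eq_zero] at h; rw [h] at this; exact lt_irrefl _ this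
        rw [hsupp]
        exact (hne).bot_lt
      · refine Filter.Eventually.of_forall fun ω => ?_
        have : F b ω ≤ F a ω := by
          simp only [hF]
          gcongr
          all_goals first
            | (have h1 := sq_nonneg (ε ω); have h2 := ha.out; positivity)
            | exact hab.le
            | linarith [sq_nonneg (ε ω), ha.out]
        simpa using this
      · exact (hint a ha).sub (hint b hb)
    rw [integral_sub (hint a ha) (hint b hb)] at hsub
    simpa [hg] using sub_pos.mp (by linarith)
  -- tendsto at 0+
  have hS : MeasurableSet {ω | ε ω ≠ 0} := (hε (measurableSet_singleton 0)).compl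
  have htend0 : Tendsto g (nhdsWithin 0 (Set.Ioi 0)) (nhds (2 * (P {ω | ε ω ≠ 0}).toReal)) := by
    have key : Tendsto g (nhdsWithin 0 (Set.Ioi 0))
        (nhds (∫ ω, Set.indicator {ω | ε ω ≠ 0} (fun _ => (2:ℝ)) ω ∂P)) := by
      apply tendsto_integral_filter_of_dominated_convergence (bound := fun _ => (2:ℝ))
      · exact Filter.Eventually.of_forall fun c => hmeas c
      · filter_upwards [self_mem_nhdsWithin] with c hc
        exact Filter.Eventually.of_forall (hbn c hc)
      · exact integrable_const 2
      · refine Filter.Eventually.of_forall fun ω => ?_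
        by_cases h0 : ε ω = 0
        · simp [hF, h0, Set.indicator_apply]
        · have hx : (0:ℝ) < (ε ω) ^ 2 := by positivity
          have hca : ContinuousAt (fun c : ℝ => 2 * (ε ω) ^ 2 / (c + (ε ω) ^ 2)) 0 := by
            apply continuousAt_const.div ((continuous_id.add continuous_const).continuousAt)
            simpa using hx.ne'
          have := hca.tendsto.mono_left (nhdsWithin_le_nhds (s := Set.Ioi (0:ℝ)))
          simp only [zero_add] at this
          rw [mul_div_assoc, div_self hx.ne', mul_one] at this
          simpa [hF, Set.indicator_apply, h0] using this
    rwa [integral_indicator_const _ hS, smul_eq_mul, mul_comm] at key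
  -- > 1
  have hgt1 : 1 < 2 * (P {ω | ε ω ≠ 0}).toReal := by linarith
  -- tendsto atTop
  have htendtop : Tendsto g atTop (nhds 0) := by
    have key : Tendsto g atTop (nhds (∫ _ω, (0:ℝ) ∂P)) := by
      apply tendsto_integral_filter_of_dominated_convergence (bound := fun _ => (2:ℝ))
      · exact Filter.Eventually.of_forall fun c => hmeas c
      · filter_upwards [eventually_gt_atTop (0:ℝ)] with c hc
        exact Filter.Eventually.of_forall (hbn c hc)
      · exact integrable_const 2
      · refine Filter.Eventually.of_forall fun ω => ?_
        simp only [hF]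
        exact Tendsto.div_atTop tendsto_const_nhds
          (tendsto_atTop_add_const_right _ _ tendsto_id)
    simpa using key
  -- existence and uniqueness
  have hexu : ∃! c : ℝ, 0 < c ∧ g c = 1 := by
    obtain ⟨a, ha0, hga⟩ : ∃ a : ℝ, 0 < a ∧ 1 < g a := by
      have := htend0.eventually (eventually_gt_nhds hgt1)
      rcases (this.and self_mem_nhdsWithin).exists with ⟨a, h1, h2⟩
      exact ⟨a, h2, h1⟩
    obtain ⟨b, hab, hgb⟩ : ∃ b : ℝ, a ≤ b ∧ g b < 1 := by
      have := htendtop.eventually (eventually_lt_nhds one_pos)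
      rcases (this.and (eventually_ge_atTop a)).exists with ⟨b, h1, h2⟩
      exact ⟨b, h2, h1⟩
    have hIcc : Set.Icc a b ⊆ Set.Ioi (0:ℝ) := fun x hx => lt_of_lt_of_le ha0 hx.1
    have hc : ContinuousOn g (Set.Icc a b) := hcont.mono hIcc
    have : (1:ℝ) ∈ g '' Set.Icc a b := by
      apply intermediate_value_Icc' hab hc
      exact ⟨hgb.le, hga.le⟩
    obtain ⟨c, hc1, hc2⟩ := this
    refine ⟨c, ⟨hIcc hc1, hc2⟩, ?_⟩
    rintro d ⟨hd0, hd1⟩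
    by_contra hne'
    rcases lt_or_gt_of_ne hne' with h | h
    · have := hanti (Set.mem_Ioi.mpr hd0) (hIcc hc1) h
      rw [hd1, hc2] at this; exact lt_irrefl _ this
    · have := hanti (hIcc hc1) (Set.mem_Ioi.mpr hd0) h
      rw [hd1, hc2] at this; exact lt_irrefl _ this
  exact ⟨hcont, hanti, htend0, hgt1, htendtop, hexu⟩
end
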